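/- Let N ≥ 9 be an integer and set m = ⌊(N+1)/10⌋. Let i_1, …, i_{N+1} be i.i.d. uniform random variables on {1, …, m}. Then with probability at least 0.97 there exists a permutation π of {1, …, N+1} such that i_{π(t)} ≤ t for every t ∈ {1, …, N+1}. -/

import Mathlib

open scoped Classical

open Finset

lemma good_of_counting (n m : ℕ) (v : Fin n → Fin m)
    (h : ∀ j : ℕ, 1 ≤ j → j < m →
      j ≤ (univ.filter (fun s => (v s : ℕ) < j)).card) :
    ∃ π : Equiv.Perm (Fin n), ∀ t : Fin n, (v (π t) : ℕ) ≤ (t : ℕ) := by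
  classical
  refine ⟨Tuple.sort v, fun t => ?_⟩
  by_contra hc
  push_neg at hc
  set π := Tuple.sort v with hπ
  have hjm : (t : ℕ) + 1 < m := lt_of_le_of_lt hc (v (π t)).isLt
  have hcard := h ((t : ℕ) + 1) (Nat.le_add_left 1 _) hjm
  have hsub : (univ.filter (fun s => (v s : ℕ) < (t : ℕ) + 1)) ⊆
      (Finset.Iio t).image π := by
    intro s hs
    simp only [mem_filter, mem_univ, true_and] at hs
    have hu : π.symm s < t := by
      by_contra hu
      push_neg at hu
      have : v (π t) ≤ v (π (π.symm s)) := Tuple.monotone_sort v hu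
      rw [Equiv.apply_symm_apply] at this
      have : (v (π t) : ℕ) ≤ (v s : ℕ) := this
      omega
    refine mem_image.2 ⟨π.symm s, mem_Iio.2 hu, Equiv.apply_symm_apply _ _⟩
  have h1 : (univ.filter (fun s => (v s : ℕ) < (t : ℕ) + 1)).card ≤ (t : ℕ) := by
    calc _ ≤ ((Finset.Iio t).image π).card := card_le_card hsub
    _ ≤ (Finset.Iio t).card := card_image_le
    _ = (t : ℕ) := Fin.card_Iio t
  omega

lemma fiber_bound (n m j : ℕ) (hjm : j < m) (S : Finset (Fin n)) :
    (univ.filter (fun v : Fin n → Fin m =>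
        univ.filter (fun s => (v s : ℕ) < j) = S)).card
      ≤ j ^ S.card * (m - j) ^ (n - S.card) := by
  classical
  set T : Fin n → Finset (Fin m) := fun s =>
    if s ∈ S then univ.filter (fun x : Fin m => (x : ℕ) < j)
    else univ.filter (fun x : Fin m => ¬ (x : ℕ) < j) with hT
  have hsub : (univ.filter (fun v : Fin n → Fin m =>
      univ.filter (fun s => (v s : ℕ) < j) = S)) ⊆ Fintype.piFinset T := by
    intro v hv
    simp only [mem_filter, mem_univ, true_and] at hv
    rw [Fintype.mem_piFinset]
    intro s
    by_cases hs : s ∈ S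
    · have h1 : s ∈ univ.filter (fun s => (v s : ℕ) < j) := hv ▸ hs
      have : (v s : ℕ) < j := (mem_filter.1 h1).2
      simp [hT, hs, this]
    · have : ¬ (v s : ℕ) < j := by
        intro hlt
        exact hs (hv ▸ (mem_filter.2 ⟨mem_univ s, hlt⟩))
      simp only [hT, if_neg hs, mem_filter, mem_univ, true_and]
      exact this
  have hlt : (univ.filter (fun x : Fin m => (x : ℕ) < j)).card = j := by
    have : (univ.filter (fun x : Fin m => (x : ℕ) < j)) = Finset.Iio (⟨j, hjm⟩ : Fin m) := by
      ext x; simp [Fin.lt_def]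
    rw [this, Fin.card_Iio]
  have hge : (univ.filter (fun x : Fin m => ¬ (x : ℕ) < j)).card = m - j := by
    have h2 := Finset.card_filter_add_card_filter_not
      (s := (univ : Finset (Fin m))) (p := fun x : Fin m => (x : ℕ) < j)
    simp only [card_univ, Fintype.card_fin] at h2
    omega
  have hScard : S.card ≤ n := by
    simpa using card_le_card (subset_univ S)
  calc _ ≤ (Fintype.piFinset T).card := card_le_card hsub
    _ = ∏ s : Fin n, (T s).card := Fintype.card_piFinset T
    _ = ∏ s : Fin n, (if s ∈ S then j else m - j) := by
        apply Finset.prod_congr rfl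
        intro s _
        by_cases hs : s ∈ S
        · simp only [hT, if_pos hs]; rw [hlt]
        · simp only [hT, if_neg hs]; rw [hge]
    _ = j ^ S.card * (m - j) ^ (n - S.card) := by
        rw [Finset.prod_ite (f := fun _ => j) (g := fun _ => m - j)]
        simp only [prod_const]
        congr 1
        · congr 1
          simp [filter_mem_eq_inter]
        · congr 1
          have h2 := Finset.card_filter_add_card_filter_not
            (s := (univ : Finset (Fin n))) (p := fun s => s ∈ S)
          simp only [card_univ, Fintype.card_fin] at h2
          have : (univ.filter (fun s => s ∈ S)).card = S.card := by
            simp [filter_mem_eq_inter]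
          omega

lemma Tmono (n m j : ℕ) (hj1 : 1 ≤ j) (hjm : j < m) (hn : 10 * m ≤ n) :
    ∀ k, k ≤ j - 1 →
      n.choose k * (j ^ k * (m - j) ^ (n - k)) ≤
      n.choose (j-1) * (j ^ (j-1) * (m - j) ^ (n - (j-1))) := by
  set T : ℕ → ℕ := fun k => n.choose k * (j ^ k * (m - j) ^ (n - k)) with hTdef
  have step : ∀ k, k < j - 1 → T k ≤ T (k + 1) := by
    intro k hk
    have key : (k + 1) * (m - j) ≤ (n - k) * j := by
      have h1 : k + 1 ≤ j := by omega
      have h2 : m - j ≤ n - k := by omega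
      calc (k+1) * (m-j) ≤ j * (n - k) := Nat.mul_le_mul h1 h2
        _ = (n - k) * j := Nat.mul_comm _ _
    have h1 : n - k = (n - (k+1)) + 1 := by omega
    have hpos : 0 < k + 1 := Nat.succ_pos k
    refine Nat.le_of_mul_le_mul_left ?_ hpos
    calc (k+1) * T k
        = (n.choose k * (j ^ k * (m-j) ^ (n-(k+1)))) * ((k+1) * (m-j)) := by
          simp only [hTdef]; rw [h1, pow_succ]; ring
      _ ≤ (n.choose k * (j ^ k * (m-j) ^ (n-(k+1)))) * ((n-k) * j) :=
          Nat.mul_le_mul_left _ key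
      _ = (n.choose (k+1) * (k+1)) * (j ^ k * j * (m-j) ^ (n-(k+1))) := by
          rw [Nat.choose_succ_right_eq]; ring
      _ = (k+1) * T (k+1) := by
          simp only [hTdef]; rw [pow_succ]; ring
  intro k hk
  have gen : ∀ d k, k + d = j - 1 → T k ≤ T (j - 1) := by
    intro d
    induction d with
    | zero => intro k hk; simp at hk; rw [hk]
    | succ d ih =>
        intro k hk
        have : T k ≤ T (k+1) := step k (by omega)
        exact this.trans (ih (k+1) (by omega))
  exact gen (j - 1 - k) k (by omega)

lemma Bj_bound (n m j : ℕ) (hj1 : 1 ≤ j) (hjm : j < m) (hn : 10 * m ≤ n) :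
    (univ.filter (fun v : Fin n → Fin m =>
        (univ.filter (fun s => (v s : ℕ) < j)).card < j)).card
      ≤ j * (n.choose (j-1) * (j ^ (j-1) * (m - j) ^ (n + 1 - j))) := by
  classical
  have hexp : n - (j - 1) = n + 1 - j := by omega
  set Bj := (univ.filter (fun v : Fin n → Fin m =>
      (univ.filter (fun s => (v s : ℕ) < j)).card < j)) with hBj
  set 𝒮 := ((univ : Finset (Fin n)).powerset.filter (fun S => S.card < j)) with hS
  have hmap : ∀ v ∈ Bj, (univ.filter (fun s => (v s : ℕ) < j)) ∈ 𝒮 := by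
    intro v hv
    simp only [hBj, mem_filter, mem_univ, true_and] at hv
    simp only [hS, mem_filter, mem_powerset]
    exact ⟨subset_univ _, hv⟩
  have hcard := Finset.card_eq_sum_card_fiberwise hmap
  have hfib : ∀ S ∈ 𝒮,
      (Bj.filter (fun v => (univ.filter (fun s => (v s : ℕ) < j)) = S)).card
        ≤ j ^ S.card * (m - j) ^ (n - S.card) := by
    intro S _
    refine le_trans (card_le_card ?_) (fiber_bound n m j hjm S)
    intro v hv
    simp only [mem_filter] at hv ⊢
    exact ⟨mem_univ v, hv.2⟩
  have hsum1 : Bj.card ≤ ∑ S ∈ 𝒮, j ^ S.card * (m - j) ^ (n - S.card) := by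
    rw [hcard]; exact Finset.sum_le_sum hfib
  have hSdecomp : 𝒮 = (Finset.range j).biUnion (fun k => Finset.powersetCard k univ) := by
    ext S
    simp only [hS, mem_filter, mem_powerset, mem_biUnion, Finset.mem_range,
      Finset.mem_powersetCard]
    constructor
    · rintro ⟨h1, h2⟩; exact ⟨S.card, h2, h1, rfl⟩
    · rintro ⟨k, hk, _, rfl⟩; exact ⟨subset_univ _, hk⟩
  have hdisj : ∀ k1 ∈ Finset.range j, ∀ k2 ∈ Finset.range j, k1 ≠ k2 →
      Disjoint (Finset.powersetCard k1 (univ : Finset (Fin n)))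
               (Finset.powersetCard k2 univ) := by
    intro k1 _ k2 _ hne
    exact Finset.pairwise_disjoint_powersetCard univ hne
  have hsum2 : ∑ S ∈ 𝒮, j ^ S.card * (m - j) ^ (n - S.card)
      = ∑ k ∈ Finset.range j, n.choose k * (j ^ k * (m - j) ^ (n - k)) := by
    rw [hSdecomp, Finset.sum_biUnion hdisj]
    apply Finset.sum_congr rfl
    intro k _
    have := Finset.sum_powersetCard k (univ : Finset (Fin n))
      (fun c => j ^ c * (m - j) ^ (n - c))
    rw [this]
    simp [card_univ, smul_eq_mul]
  have hsum3 : ∑ k ∈ Finset.range j, n.choose k * (j ^ k * (m - j) ^ (n - k))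
      ≤ j * (n.choose (j-1) * (j ^ (j-1) * (m - j) ^ (n - (j-1)))) := by
    have h1 : ∑ k ∈ Finset.range j, n.choose k * (j ^ k * (m - j) ^ (n - k))
        ≤ ∑ _k ∈ Finset.range j,
          n.choose (j-1) * (j ^ (j-1) * (m - j) ^ (n - (j-1))) := by
      apply Finset.sum_le_sum
      intro k hk
      have hk' : k ≤ j - 1 := Nat.le_sub_one_of_lt (Finset.mem_range.1 hk)
      exact Tmono n m j hj1 hjm hn k hk'
    have h2 : ∑ _k ∈ Finset.range j,
          n.choose (j-1) * (j ^ (j-1) * (m - j) ^ (n - (j-1)))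
        = j * (n.choose (j-1) * (j ^ (j-1) * (m - j) ^ (n - (j-1)))) := by
      rw [Finset.sum_const, Finset.card_range, smul_eq_mul]
    exact h2 ▸ h1
  calc Bj.card ≤ _ := hsum1
    _ = _ := hsum2
    _ ≤ _ := hsum3
    _ = j * (n.choose (j-1) * (j ^ (j-1) * (m - j) ^ (n + 1 - j))) := by rw [hexp]

lemma fact_bound : ∀ k : ℕ, ((k+1 : ℕ) : ℝ) ^ k ≤ (Nat.factorial k : ℝ) * Real.exp (k+1) := by
  intro k
  induction k with
  | zero => simpa using (Real.one_le_exp (by norm_num)).le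
  | succ k ih =>
      have hk1 : (0:ℝ) < (k+1 : ℝ) := by positivity
      have e1 : ((k+2 : ℝ)) ^ (k+1) ≤ ((k+1:ℝ))^(k+1) * Real.exp 1 := by
        have h0 : (k+2 : ℝ) = (k+1) * (1 + 1/(k+1)) := by field_simp; ring
        have h1 : (1 + 1/(k+1) : ℝ) ≤ Real.exp (1/(k+1)) := by
          have := Real.add_one_le_exp (1/(k+1) : ℝ)
          linarith
        have h2 : ((1 + 1/(k+1) : ℝ)) ^ (k+1) ≤ Real.exp (1/(k+1)) ^ (k+1) := by
          apply pow_le_pow_left₀ (by positivity) h1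
        have h3 : Real.exp (1/(k+1) : ℝ) ^ (k+1) = Real.exp 1 := by
          rw [← Real.exp_nat_mul]
          congr 1
          field_simp
          norm_num
        calc ((k+2 : ℝ)) ^ (k+1) = ((k+1:ℝ))^(k+1) * ((1 + 1/(k+1) : ℝ)) ^ (k+1) := by
              rw [h0, mul_pow]
          _ ≤ ((k+1:ℝ))^(k+1) * Real.exp 1 := by
              rw [← h3]; exact mul_le_mul_of_nonneg_left h2 (by positivity)
      have e2 : ((k+1:ℝ))^(k+1) ≤ (Nat.factorial (k+1) : ℝ) * Real.exp (k+1) := by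
        calc ((k+1:ℝ))^(k+1) = (k+1) * ((k+1:ℝ))^k := by ring
          _ ≤ (k+1) * ((Nat.factorial k : ℝ) * Real.exp (k+1)) := by
              apply mul_le_mul_of_nonneg_left _ (by positivity)
              simpa using ih
          _ = (Nat.factorial (k+1) : ℝ) * Real.exp (k+1) := by
              rw [Nat.factorial_succ]; push_cast; ring
      calc ((k+1+1 : ℕ) : ℝ) ^ (k+1) = ((k+2:ℝ)) ^ (k+1) := by push_cast; ring_nf
        _ ≤ ((k+1:ℝ))^(k+1) * Real.exp 1 := e1
        _ ≤ ((Nat.factorial (k+1) : ℝ) * Real.exp (k+1)) * Real.exp 1 := by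
            apply mul_le_mul_of_nonneg_right e2 (Real.exp_pos 1).le
        _ = (Nat.factorial (k+1) : ℝ) * Real.exp ((k+1 : ℕ)+1) := by
            rw [mul_assoc, ← Real.exp_add]; push_cast; ring_nf

lemma pow_sub_bound (n m j : ℕ) (hj1 : 1 ≤ j) (hjm : j < m) (hn1 : 10*m ≤ n) :
    ((m - j : ℕ) : ℝ) ^ (n + 1 - j) ≤ (m:ℝ) ^ (n + 1 - j) * Real.exp (-(9*j)) := by
  have hm0 : (0:ℝ) < m := by
    have : 0 < m := by omega
    exact_mod_cast this
  have hcast : ((m - j : ℕ) : ℝ) = (m:ℝ) * (1 - j/m) := by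
    rw [Nat.cast_sub hjm.le]; field_simp
  have h1 : (1 - (j:ℝ)/m) ≤ Real.exp (-(j/m)) := by
    have := Real.add_one_le_exp (-(j:ℝ)/m)
    have heq : (-(j:ℝ)/m) = -(j/m) := by ring
    linarith [heq ▸ this]
  have hnn : (0:ℝ) ≤ 1 - (j:ℝ)/m := by
    rw [sub_nonneg, div_le_one hm0]
    exact_mod_cast hjm.le
  set E := n + 1 - j with hE
  have hE9 : 9 * m ≤ E := by omega
  have step1 : ((m - j : ℕ) : ℝ) ^ E ≤ ((m:ℝ) * Real.exp (-(j/m))) ^ E := by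
    apply pow_le_pow_left₀ (by rw [hcast]; positivity)
    rw [hcast]
    exact mul_le_mul_of_nonneg_left h1 hm0.le
  have step2 : ((m:ℝ) * Real.exp (-(j/m))) ^ E
      = (m:ℝ)^E * Real.exp (-(j/m) * E) := by
    rw [mul_pow, ← Real.exp_nat_mul]
    ring_nf
  have step3 : Real.exp (-(j:ℝ)/m * E) ≤ Real.exp (-(9*j)) := by
    apply Real.exp_le_exp.2
    have hjE : (9:ℝ) * j * m ≤ j * E := by
      have : (9 * m : ℕ) ≤ E := hE9
      have hEc : (9*m : ℝ) ≤ (E:ℝ) := by exact_mod_cast this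
      have hj0 : (0:ℝ) ≤ j := by positivity
      nlinarith
    rw [neg_div, neg_mul, neg_le_neg_iff]
    rw [div_mul_eq_mul_div, le_div_iff₀ hm0]
    linarith
  calc ((m - j : ℕ) : ℝ) ^ E ≤ _ := step1
    _ = (m:ℝ)^E * Real.exp (-(j/m) * E) := step2
    _ ≤ (m:ℝ)^E * Real.exp (-(9*j)) := by
        apply mul_le_mul_of_nonneg_left _ (by positivity)
        have : (-(j:ℝ)/m * E) = (-(j/m) * E) := by ring
        exact this ▸ step3

lemma exp8_ge : (2950:ℝ) ≤ Real.exp 8 := by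
  have h := Real.exp_one_gt_d9.le
  have h8 : (2.7182818283:ℝ)^8 ≤ Real.exp 1 ^ 8 := by
    apply pow_le_pow_left₀ (by norm_num) h
  have : Real.exp 1 ^ 8 = Real.exp 8 := by
    rw [← Real.exp_nat_mul]; norm_num
  rw [← this]
  refine le_trans ?_ h8
  norm_num

lemma numeric_bound (j : ℕ) (hj1 : 1 ≤ j) :
    (j:ℝ) * 15^(j-1) * Real.exp (-(8*j)) ≤ (0.02:ℝ)^j := by
  have hexpj : Real.exp (-(8*(j:ℝ))) = (Real.exp (-8))^j := by
    rw [← Real.exp_nat_mul]; ring_nf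
  have hexp8 : Real.exp (-8) ≤ 1/2950 := by
    rw [Real.exp_neg]
    rw [inv_le_comm₀ (Real.exp_pos 8) (by norm_num)]
    calc (1/2950 : ℝ)⁻¹ = 2950 := by norm_num
      _ ≤ Real.exp 8 := exp8_ge
  have hj2 : (j:ℝ) ≤ 2^j := by
    exact_mod_cast (Nat.lt_two_pow_self (n := j)).le
  have h15 : (15:ℝ)^(j-1) ≤ 15^j := by
    apply pow_le_pow_right₀ (by norm_num) (by omega)
  have step1 : (j:ℝ) * 15^(j-1) ≤ 30^j := by
    calc (j:ℝ) * 15^(j-1) ≤ 2^j * 15^j := by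
          apply mul_le_mul hj2 h15 (by positivity) (by positivity)
      _ = 30^j := by rw [← mul_pow]; norm_num
  have step2 : (Real.exp (-8))^j ≤ (1/2950:ℝ)^j := by
    apply pow_le_pow_left₀ (Real.exp_pos _).le hexp8
  calc (j:ℝ) * 15^(j-1) * Real.exp (-(8*j))
      = ((j:ℝ) * 15^(j-1)) * (Real.exp (-8))^j := by rw [hexpj]
    _ ≤ 30^j * (1/2950:ℝ)^j := by
        apply mul_le_mul step1 step2 (by positivity) (by positivity)
    _ = ((30/2950:ℝ))^j := by rw [← mul_pow]; norm_num
    _ ≤ (0.02:ℝ)^j := by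
        apply pow_le_pow_left₀ (by norm_num) (by norm_num)

lemma sum_geom_bound (m : ℕ) : ∑ j ∈ Finset.Ico 1 m, (0.02:ℝ)^j ≤ 0.03 := by
  rcases Nat.eq_zero_or_pos m with hm | hm
  · subst hm; simp; norm_num
  have h1 : ∑ j ∈ Finset.Ico 1 m, (0.02:ℝ)^j
      = ∑ i ∈ Finset.range (m-1), (0.02:ℝ)^(1+i) := by
    rw [Finset.sum_Ico_eq_sum_range]
  have h2 : ∑ i ∈ Finset.range (m-1), (0.02:ℝ)^(1+i)
      = 0.02 * ∑ i ∈ Finset.range (m-1), (0.02:ℝ)^i := by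
    rw [Finset.mul_sum]
    apply Finset.sum_congr rfl
    intro i _
    rw [pow_add, pow_one]
  have h3 : ∑ i ∈ Finset.range (m-1), (0.02:ℝ)^i ≤ 1/0.98 := by
    rw [geom_sum_eq (by norm_num)]
    have hp : (0:ℝ) ≤ (0.02:ℝ)^(m-1) := by positivity
    have heq : ((0.02:ℝ)^(m-1) - 1) / (0.02 - 1) = (1 - (0.02:ℝ)^(m-1)) / 0.98 := by
      ring_nf
    rw [heq]
    rw [div_le_div_iff₀ (by norm_num) (by norm_num)]
    nlinarith
  calc ∑ j ∈ Finset.Ico 1 m, (0.02:ℝ)^j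
      = 0.02 * ∑ i ∈ Finset.range (m-1), (0.02:ℝ)^i := by rw [h1, h2]
    _ ≤ 0.02 * (1/0.98) := by
        apply mul_le_mul_of_nonneg_left h3 (by norm_num)
    _ ≤ 0.03 := by norm_num

lemma term_bound (n m j : ℕ) (hj1 : 1 ≤ j) (hjm : j < m) (hn1 : 10*m ≤ n)
    (hn2 : n ≤ 10*m+9) :
    ((j * (n.choose (j-1) * (j^(j-1) * (m-j)^(n+1-j))) : ℕ) : ℝ)
      ≤ (0.02:ℝ)^j * (m:ℝ)^n := by
  have hm2 : 2 ≤ m := by omega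
  have hF : (0:ℝ) < (Nat.factorial (j-1) : ℝ) := by
    exact_mod_cast (Nat.factorial_pos (j-1))
  have haN : Nat.factorial (j-1) * n.choose (j-1) ≤ n^(j-1) := by
    rw [← Nat.descFactorial_eq_factorial_mul_choose]
    exact Nat.descFactorial_le_pow n (j-1)
  have ha : (n.choose (j-1) : ℝ) * (Nat.factorial (j-1) : ℝ) ≤ (n:ℝ)^(j-1) := by
    rw [mul_comm]; exact_mod_cast haN
  have hb : (j:ℝ)^(j-1) ≤ (Nat.factorial (j-1) : ℝ) * Real.exp j := by
    have h := fact_bound (j-1)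
    have h1 : ((j-1)+1 : ℕ) = j := by omega
    have h2 : (((j-1):ℕ):ℝ) + 1 = (j:ℝ) := by
      have : ((j:ℕ):ℝ) - 1 = (((j-1):ℕ):ℝ) := by
        rw [Nat.cast_sub hj1]; norm_num
      linarith [this]
    rw [h1, h2] at h
    exact h
  have hc := pow_sub_bound n m j hj1 hjm hn1
  have key1 : (n.choose (j-1) : ℝ) * (j:ℝ)^(j-1) ≤ (n:ℝ)^(j-1) * Real.exp j := by
    calc (n.choose (j-1) : ℝ) * (j:ℝ)^(j-1)
        ≤ (n.choose (j-1) : ℝ) * ((Nat.factorial (j-1) : ℝ) * Real.exp j) := by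
          apply mul_le_mul_of_nonneg_left hb (by positivity)
      _ = ((n.choose (j-1) : ℝ) * (Nat.factorial (j-1) : ℝ)) * Real.exp j := by ring
      _ ≤ (n:ℝ)^(j-1) * Real.exp j := by
          apply mul_le_mul_of_nonneg_right ha (Real.exp_pos _).le
  have hcast : ((j * (n.choose (j-1) * (j^(j-1) * (m-j)^(n+1-j))) : ℕ) : ℝ)
      = (j:ℝ) * (((n.choose (j-1) : ℝ) * (j:ℝ)^(j-1)) * ((m-j:ℕ):ℝ)^(n+1-j)) := by
    push_cast
    ring
  have hexpc : Real.exp (j:ℝ) * Real.exp (-(9*(j:ℝ))) = Real.exp (-(8*(j:ℝ))) := by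
    rw [← Real.exp_add]; ring_nf
  have hn15 : (n:ℝ) ≤ 15 * (m:ℝ) := by
    have : n ≤ 15 * m := by omega
    exact_mod_cast this
  have hpow15 : (n:ℝ)^(j-1) ≤ 15^(j-1) * (m:ℝ)^(j-1) := by
    calc (n:ℝ)^(j-1) ≤ (15 * (m:ℝ))^(j-1) := by
          apply pow_le_pow_left₀ (by positivity) hn15
      _ = 15^(j-1) * (m:ℝ)^(j-1) := by rw [mul_pow]
  have hmpow : (m:ℝ)^(j-1) * (m:ℝ)^(n+1-j) = (m:ℝ)^n := by
    rw [← pow_add]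
    congr 1
    omega
  rw [hcast]
  calc (j:ℝ) * (((n.choose (j-1) : ℝ) * (j:ℝ)^(j-1)) * ((m-j:ℕ):ℝ)^(n+1-j))
      ≤ (j:ℝ) * (((n:ℝ)^(j-1) * Real.exp j) * ((m:ℝ)^(n+1-j) * Real.exp (-(9*j)))) := by
        apply mul_le_mul_of_nonneg_left _ (by positivity)
        apply mul_le_mul key1 hc (by positivity) (by positivity)
    _ = (n:ℝ)^(j-1) * (m:ℝ)^(n+1-j) * ((j:ℝ) * (Real.exp j * Real.exp (-(9*(j:ℝ))))) := by
        ring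
    _ = (n:ℝ)^(j-1) * (m:ℝ)^(n+1-j) * ((j:ℝ) * Real.exp (-(8*(j:ℝ)))) := by
        rw [hexpc]
    _ ≤ (15^(j-1) * (m:ℝ)^(j-1)) * (m:ℝ)^(n+1-j) * ((j:ℝ) * Real.exp (-(8*(j:ℝ)))) := by
        apply mul_le_mul_of_nonneg_right _ (by positivity)
        apply mul_le_mul_of_nonneg_right hpow15 (by positivity)
    _ = ((j:ℝ) * 15^(j-1) * Real.exp (-(8*(j:ℝ)))) * ((m:ℝ)^(j-1) * (m:ℝ)^(n+1-j)) := by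
        ring
    _ ≤ (0.02:ℝ)^j * ((m:ℝ)^(j-1) * (m:ℝ)^(n+1-j)) := by
        apply mul_le_mul_of_nonneg_right (numeric_bound j hj1) (by positivity)
    _ = (0.02:ℝ)^j * (m:ℝ)^n := by rw [hmpow]

/-- Lemma D.1 of the paper, random construction, in index
form.  Let `N ≥ 9`, `m = ⌊(N+1)/10⌋` and `i_1, …, i_{N+1}` i.i.d. uniform on
`{1,…,m}` (encoded as `v : Fin (N+1) → Fin m`, the value of `i_t` being
`(v t) + 1`).  Then with probability at least `0.97` there is a permutation `π`
of `{1,…,N+1}` such that `i_{π(t)} ≤ t` for every `t`; the probability is the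
number of favourable outcomes divided by `m^{N+1}`. -/
theorem stmt16 (N : ℕ) (hN : 9 ≤ N) :
    (0.97 : ℝ) ≤
      ((Finset.univ.filter (fun v : Fin (N+1) → Fin ((N+1)/10) =>
            ∃ π : Equiv.Perm (Fin (N+1)),
              ∀ t : Fin (N+1), (v (π t) : ℕ) + 1 ≤ (t : ℕ) + 1)).card : ℝ)
        / (((N+1)/10 : ℕ) : ℝ) ^ (N+1) := by
  classical
  set n := N + 1 with hn
  set m := (N+1)/10 with hm
  have hm1 : 1 ≤ m := by omega
  have hn1 : 10 * m ≤ n := by omega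
  have hn2 : n ≤ 10 * m + 9 := by omega
  set Good := (Finset.univ.filter (fun v : Fin n → Fin m =>
      ∃ π : Equiv.Perm (Fin n),
        ∀ t : Fin n, (v (π t) : ℕ) + 1 ≤ (t : ℕ) + 1)) with hGood
  set Bad := (Finset.univ.filter (fun v : Fin n → Fin m =>
      ¬ ∃ π : Equiv.Perm (Fin n),
        ∀ t : Fin n, (v (π t) : ℕ) + 1 ≤ (t : ℕ) + 1)) with hBad
  have hcompl : Good.card + Bad.card = m ^ n := by
    rw [hGood, hBad]
    rw [Finset.card_filter_add_card_filter_not]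
    simp [Finset.card_univ]
  -- Bad is contained in the union of the B_j
  have hBadsub : Bad ⊆ (Finset.Ico 1 m).biUnion (fun j =>
      univ.filter (fun v : Fin n → Fin m =>
        (univ.filter (fun s => (v s : ℕ) < j)).card < j)) := by
    intro v hv
    simp only [hBad, mem_filter, mem_univ, true_and] at hv
    by_contra hcon
    simp only [mem_biUnion, Finset.mem_Ico, mem_filter, mem_univ, true_and,
      not_exists, not_and, not_lt] at hcon
    apply hv
    have h := good_of_counting n m v (fun j h1 h2 => hcon j ⟨h1, h2⟩)
    obtain ⟨π, hπ⟩ := h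
    exact ⟨π, fun t => Nat.succ_le_succ (hπ t)⟩
  have hBadcard : Bad.card ≤ ∑ j ∈ Finset.Ico 1 m,
      j * (n.choose (j-1) * (j ^ (j-1) * (m - j) ^ (n + 1 - j))) := by
    calc Bad.card ≤ ∑ j ∈ Finset.Ico 1 m,
          (univ.filter (fun v : Fin n → Fin m =>
            (univ.filter (fun s => (v s : ℕ) < j)).card < j)).card :=
          le_trans (card_le_card hBadsub) (Finset.card_biUnion_le)
      _ ≤ _ := by
          apply Finset.sum_le_sum
          intro j hj
          have hj' := Finset.mem_Ico.1 hj
          exact Bj_bound n m j hj'.1 hj'.2 hn1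
  have hmn0 : (0:ℝ) < (m:ℝ) ^ n := by
    have : (0:ℝ) < (m:ℝ) := by exact_mod_cast hm1
    positivity
  have hBadR : (Bad.card : ℝ) ≤ 0.03 * (m:ℝ) ^ n := by
    calc (Bad.card : ℝ)
        ≤ ((∑ j ∈ Finset.Ico 1 m,
            j * (n.choose (j-1) * (j ^ (j-1) * (m - j) ^ (n + 1 - j))) : ℕ) : ℝ) := by
          exact_mod_cast hBadcard
      _ = ∑ j ∈ Finset.Ico 1 m,
            ((j * (n.choose (j-1) * (j ^ (j-1) * (m - j) ^ (n + 1 - j))) : ℕ) : ℝ) := by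
          push_cast; rfl
      _ ≤ ∑ j ∈ Finset.Ico 1 m, (0.02:ℝ)^j * (m:ℝ)^n := by
          apply Finset.sum_le_sum
          intro j hj
          have hj' := Finset.mem_Ico.1 hj
          exact term_bound n m j hj'.1 hj'.2 hn1 hn2
      _ = (∑ j ∈ Finset.Ico 1 m, (0.02:ℝ)^j) * (m:ℝ)^n := by
          rw [Finset.sum_mul]
      _ ≤ 0.03 * (m:ℝ)^n := by
          apply mul_le_mul_of_nonneg_right (sum_geom_bound m) hmn0.le
  have hGoodR : 0.97 * (m:ℝ)^n ≤ (Good.card : ℝ) := by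
    have h1 : (Good.card : ℝ) + (Bad.card : ℝ) = (m:ℝ)^n := by
      exact_mod_cast hcompl
    linarith
  rw [le_div_iff₀ hmn0]
  exact hGoodR
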